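/- For every integer n ≥ 8, β_b(C(n;1,4)) = α(C(n;1,4)) = ⌊2n/5⌋. -/

import Mathlib

/-- The eccentricity of a vertex: maximum distance to any other vertex. -/
noncomputable def eccent {V : Type*} [Fintype V] (G : SimpleGraph V) (v : V) : ℕ :=
  Finset.univ.sup (fun u => G.dist v u)

/-- The diameter of a finite graph: maximum eccentricity. -/
noncomputable def graphDiam {V : Type*} [Fintype V] (G : SimpleGraph V) : ℕ :=
  Finset.univ.sup (fun v => eccent G v)

/-- `f` is an independent broadcast on `G`. -/
def IsIndepBroadcast {V : Type*} [Fintype V] (G : SimpleGraph V) (f : V → ℕ) : Prop :=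
  (∀ v, f v ≤ eccent G v) ∧
  ∀ u v : V, u ≠ v → 0 < f u → 0 < f v → max (f u) (f v) < G.dist u v

/-- The broadcast independence number: maximum cost of an independent broadcast. -/
noncomputable def betaB {V : Type*} [Fintype V] (G : SimpleGraph V) : ℕ :=
  sSup {k | ∃ f : V → ℕ, IsIndepBroadcast G f ∧ ∑ v, f v = k}

/-- The independence number: maximum size of an independent set. -/
noncomputable def alphaNum {V : Type*} [Fintype V] (G : SimpleGraph V) : ℕ :=
  sSup {k | ∃ s : Finset V, (∀ u ∈ s, ∀ v ∈ s, ¬ G.Adj u v) ∧ s.card = k}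

/-- The circulant graph `C(n;1,a)` on vertices `v_0,…,v_{n-1}` with edges
`v_i v_{i+1}` and `v_i v_{i+a}`, indices mod `n`. -/
def circulantGraph (n a : ℕ) : SimpleGraph (Fin n) :=
  SimpleGraph.fromRel (fun i j => (i.val + 1) % n = j.val ∨ (i.val + a) % n = j.val)

open Fin.NatCast Fin.CommRing

section Dev
variable {n : ℕ} [NeZero n] (hn : 8 ≤ n)

lemma two_mod {x : ℕ} (h0 : 0 < n) (h : x < 2*n) : x % n = if x < n then x else x - n := by
  split
  · exact Nat.mod_eq_of_lt (by omega)
  · rw [Nat.mod_eq_sub_mod (by omega)]; exact Nat.mod_eq_of_lt (by omega)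

lemma adj_iff {x y : Fin n} : (circulantGraph n 4).Adj x y ↔ x ≠ y ∧
    ((x.val + 1) % n = y.val ∨ (x.val + 4) % n = y.val ∨
     (y.val + 1) % n = x.val ∨ (y.val + 4) % n = x.val) := by
  constructor
  · rintro ⟨hne, h | h⟩
    · exact ⟨hne, by tauto⟩
    · exact ⟨hne, by tauto⟩
  · rintro ⟨hne, h⟩
    exact ⟨hne, by tauto⟩

include hn

lemma val_add_nat (x : Fin n) (s : ℕ) (hs : s < n) : (x + (s : Fin n)).val = (x.val + s) % n := by
  have : (s : Fin n).val = s := by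
    rw [Fin.val_natCast]; exact Nat.mod_eq_of_lt hs
  rw [Fin.add_def, this]

lemma adj_step (x : Fin n) (s : ℕ) (hs : s = 1 ∨ s = 4) :
    (circulantGraph n 4).Adj x (x + (s : Fin n)) := by
  have hsn : s < n := by omega
  have hv : (x + (s : Fin n)).val = (x.val + s) % n := val_add_nat hn x s hsn
  rw [adj_iff]
  constructor
  · intro hEq
    have h2 := congrArg Fin.val hEq
    rw [hv] at h2
    rw [two_mod (by omega) (by have := x.isLt; omega)] at h2
    have := x.isLt
    split at h2 <;> omega
  · rcases hs with rfl | rfl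
    · left; rw [hv]
    · right; left; rw [hv]

lemma reach_step (x : Fin n) (g : ℕ) : (circulantGraph n 4).Reachable x (x + (g : Fin n)) := by
  induction g with
  | zero => simpa using SimpleGraph.Reachable.refl x
  | succ g ih =>
    have h1 : (circulantGraph n 4).Reachable (x + (g : Fin n)) (x + ((g+1 : ℕ) : Fin n)) := by
      have : (x + ((g+1:ℕ) : Fin n)) = (x + (g : Fin n)) + ((1:ℕ) : Fin n) := by
        push_cast; ring
      rw [this]
      exact (adj_step hn _ 1 (by omega)).reachable
    exact ih.trans h1

lemma conn : (circulantGraph n 4).Connected := by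
  rw [SimpleGraph.connected_iff]
  refine ⟨fun a b => ?_, ⟨0⟩⟩
  have : b = a + (((b - a).val : ℕ) : Fin n) := by
    rw [Fin.cast_val_eq_self]; abel
  rw [this]; exact reach_step hn a _

lemma dist_UB (x : Fin n) (g : ℕ) : (circulantGraph n 4).dist x (x + (g : Fin n)) ≤ (g + 6)/4 := by
  induction g using Nat.strong_induction_on with
  | _ g ih =>
  rcases Nat.lt_or_ge g 4 with h4 | h4
  · interval_cases g
    · simp [SimpleGraph.dist_self]
    · calc (circulantGraph n 4).dist x (x + ((1:ℕ) : Fin n)) ≤ 1 :=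
            le_of_eq (SimpleGraph.dist_eq_one_iff_adj.mpr (adj_step hn x 1 (by omega)))
        _ ≤ _ := by norm_num
    · have h2 : ((2:ℕ) : Fin n) = ((1:ℕ):Fin n) + ((1:ℕ):Fin n) := by push_cast; ring
      calc (circulantGraph n 4).dist x (x + ((2:ℕ) : Fin n))
          ≤ (circulantGraph n 4).dist x (x + ((1:ℕ):Fin n)) +
            (circulantGraph n 4).dist (x + ((1:ℕ):Fin n)) (x + ((2:ℕ):Fin n)) :=
            (conn hn).dist_triangle
        _ ≤ 1 + 1 := by
            gcongr
            · exact le_of_eq (SimpleGraph.dist_eq_one_iff_adj.mpr (adj_step hn x 1 (by omega)))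
            · have : x + ((2:ℕ):Fin n) = (x + ((1:ℕ):Fin n)) + ((1:ℕ):Fin n) := by push_cast; ring
              rw [this]
              exact le_of_eq (SimpleGraph.dist_eq_one_iff_adj.mpr (adj_step hn _ 1 (by omega)))
        _ ≤ _ := by norm_num
    · -- g = 3 : via +4 then -1
      have hadj : (circulantGraph n 4).Adj (x + ((3:ℕ):Fin n)) (x + ((4:ℕ):Fin n)) := by
        have : x + ((4:ℕ):Fin n) = (x + ((3:ℕ):Fin n)) + ((1:ℕ):Fin n) := by push_cast; ring
        rw [this]; exact adj_step hn _ 1 (by omega)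
      calc (circulantGraph n 4).dist x (x + ((3:ℕ) : Fin n))
          ≤ (circulantGraph n 4).dist x (x + ((4:ℕ):Fin n)) +
            (circulantGraph n 4).dist (x + ((4:ℕ):Fin n)) (x + ((3:ℕ):Fin n)) :=
            (conn hn).dist_triangle
        _ ≤ 1 + 1 := by
            gcongr
            · exact le_of_eq (SimpleGraph.dist_eq_one_iff_adj.mpr (adj_step hn x 4 (by omega)))
            · rw [SimpleGraph.dist_comm]
              exact le_of_eq (SimpleGraph.dist_eq_one_iff_adj.mpr hadj)
        _ ≤ _ := by norm_num
  · have hsplit : x + (g : Fin n) = (x + ((g - 4 : ℕ) : Fin n)) + ((4:ℕ):Fin n) := by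
      have : g = (g - 4) + 4 := by omega
      rw [this]; push_cast; ring
    calc (circulantGraph n 4).dist x (x + (g : Fin n))
        ≤ (circulantGraph n 4).dist x (x + ((g-4 : ℕ) : Fin n)) +
          (circulantGraph n 4).dist (x + ((g-4:ℕ) : Fin n)) (x + (g : Fin n)) :=
          (conn hn).dist_triangle
      _ ≤ (g - 4 + 6)/4 + 1 := by
          gcongr
          · exact ih (g-4) (by omega)
          · rw [hsplit]
            exact le_of_eq (SimpleGraph.dist_eq_one_iff_adj.mpr (adj_step hn _ 4 (by omega)))
      _ ≤ (g + 6)/4 := by omega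


lemma sub_val (a b : Fin n) : (a - b).val = (a.val + (n - b.val)) % n := by
  rw [Fin.sub_def]; simp [Nat.add_comm]

lemma sub_val_add {a b : Fin n} (h : a ≠ b) : (a - b).val + (b - a).val = n := by
  have ha := a.isLt; have hb := b.isLt
  have hne : a.val ≠ b.val := fun hv => h (Fin.ext hv)
  rw [sub_val hn, sub_val hn]
  rw [two_mod (n := n) (by omega) (by omega), two_mod (n := n) (by omega) (by omega)]
  split <;> split <;> omega

lemma eq_add_sub_val (a b : Fin n) : b = a + (((b - a).val : ℕ) : Fin n) := by
  rw [Fin.cast_val_eq_self]; abel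

lemma dist_le_sub (a b : Fin n) :
    (circulantGraph n 4).dist a b ≤ ((b - a).val + 6) / 4 := by
  conv_lhs => rw [eq_add_sub_val hn a b]
  exact dist_UB hn a _

lemma adj_of_sub {a b : Fin n} (h : (b - a).val = 1 ∨ (b - a).val = 4) :
    (circulantGraph n 4).Adj a b := by
  conv_rhs => rw [eq_add_sub_val hn a b]
  rcases h with h | h <;> rw [h]
  · exact adj_step hn a 1 (by omega)
  · exact adj_step hn a 4 (by omega)

lemma pair_bound {f : Fin n → ℕ} (hf : IsIndepBroadcast (circulantGraph n 4) f)
    {a b c : Fin n} (hab : a ≠ b) (hbc : b ≠ c) (hac : a ≠ c)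
    (ha : 0 < f a) (hb : 0 < f b) (hc : 0 < f c) :
    5 * f b ≤ (b - a).val + (c - b).val := by
  set G := circulantGraph n 4 with hG
  set p := f b with hp
  have h1 : p + 1 ≤ G.dist a b :=
    Nat.succ_le_of_lt (lt_of_le_of_lt (le_max_right (f a) p) (hf.2 a b hab ha hb))
  have h2 : p + 1 ≤ G.dist b c :=
    Nat.succ_le_of_lt (lt_of_le_of_lt (le_max_left p (f c)) (hf.2 b c hbc hb hc))
  set g1 := (b - a).val with hg1
  set g2 := (c - b).val with hg2
  have e1 : (p + 1) * 4 ≤ g1 + 6 :=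
    (Nat.le_div_iff_mul_le (by norm_num)).mp (h1.trans (dist_le_sub hn a b))
  have e2 : (p + 1) * 4 ≤ g2 + 6 :=
    (Nat.le_div_iff_mul_le (by norm_num)).mp (h2.trans (dist_le_sub hn b c))
  have g1ne : g1 ≠ 1 ∧ g1 ≠ 4 := by
    constructor <;> intro hh <;>
    · have hadj : G.Adj a b := adj_of_sub hn (by omega)
      have : G.dist a b = 1 := SimpleGraph.dist_eq_one_iff_adj.mpr hadj
      omega
  have g2ne : g2 ≠ 1 ∧ g2 ≠ 4 := by
    constructor <;> intro hh <;>
    · have hadj : G.Adj b c := adj_of_sub hn (by omega)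
      have : G.dist b c = 1 := SimpleGraph.dist_eq_one_iff_adj.mpr hadj
      omega
  rcases Nat.lt_or_ge p 2 with hple | hpge
  · -- p = 1 : need g1 + g2 ≥ 5
    have hp1 : p = 1 := by omega
    by_contra hcon
    push_neg at hcon
    have hg1e : g1 = 2 := by omega
    have hg2e : g2 = 2 := by omega
    have hca : (c - a) = ((4 : ℕ) : Fin n) := by
      have hba : b - a = ((2:ℕ) : Fin n) := by
        rw [← hg1e, hg1, Fin.cast_val_eq_self]
      have hcb : c - b = ((2:ℕ) : Fin n) := by
        rw [← hg2e, hg2, Fin.cast_val_eq_self]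
      have : c - a = (c - b) + (b - a) := by abel
      rw [this, hba, hcb]; push_cast; ring
    have hval : (c - a).val = 4 := by
      rw [hca, Fin.val_natCast, Nat.mod_eq_of_lt (by omega)]
    have hadj : G.Adj a c := adj_of_sub hn (by omega)
    have hd1 : G.dist a c = 1 := SimpleGraph.dist_eq_one_iff_adj.mpr hadj
    have := hf.2 a c hac ha hc
    omega
  · omega

lemma sub_val_lt {a b : Fin n} (h : a.val < b.val) : (b - a).val = b.val - a.val := by
  have ha := a.isLt; have hb := b.isLt
  rw [sub_val hn, two_mod (n := n) (by omega) (by omega)]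
  split <;> omega

lemma sub_val_gt {a b : Fin n} (h : b.val < a.val) : (b - a).val = n + b.val - a.val := by
  have ha := a.isLt; have hb := b.isLt
  rw [sub_val hn, two_mod (n := n) (by omega) (by omega)]
  split <;> omega

lemma ecc_UB (v : Fin n) : eccent (circulantGraph n 4) v ≤ (n/2 + 6)/4 := by
  apply Finset.sup_le
  intro w _
  rcases eq_or_ne w v with rfl | hwv
  · simp [SimpleGraph.dist_self]
  · have h1 : (circulantGraph n 4).dist v w ≤ ((w - v).val + 6)/4 := dist_le_sub hn v w
    have h2 : (circulantGraph n 4).dist v w ≤ ((v - w).val + 6)/4 := by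
      rw [SimpleGraph.dist_comm]; exact dist_le_sub hn w v
    have h3 : (v - w).val + (w - v).val = n := sub_val_add hn hwv.symm
    omega

lemma sum_bound {f : Fin n → ℕ} (hf : IsIndepBroadcast (circulantGraph n 4) f) :
    5 * (∑ v, f v) ≤ 2 * n := by
  classical
  set G := circulantGraph n 4 with hG
  set s : Finset (Fin n) := Finset.univ.filter (fun v => 0 < f v) with hs
  have hsum : ∑ v, f v = ∑ v ∈ s, f v := by
    rw [hs, Finset.sum_filter_of_ne]
    intro x _ hx
    omega
  have hposmem : ∀ v ∈ s, 0 < f v := by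
    intro v hv; rw [hs, Finset.mem_filter] at hv; exact hv.2
  rcases Nat.lt_or_ge s.card 3 with hk3 | hk3
  · -- small support
    interval_cases hsc : s.card
    · rw [hsum, Finset.card_eq_zero.mp hsc]; simp
    · obtain ⟨a, hsa⟩ := Finset.card_eq_one.mp hsc
      rw [hsum, hsa, Finset.sum_singleton]
      have h1 : f a ≤ eccent G a := hf.1 a
      have h2 : eccent G a ≤ (n/2 + 6)/4 := ecc_UB hn a
      omega
    · obtain ⟨a, b, hab, hsab⟩ := Finset.card_eq_two.mp hsc
      rw [hsum, hsab, Finset.sum_pair hab]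
      have ha : 0 < f a := hposmem a (by rw [hsab]; simp)
      have hb : 0 < f b := hposmem b (by rw [hsab]; simp)
      have hd := hf.2 a b hab ha hb
      have e1 : (max (f a) (f b) + 1) ≤ ((b - a).val + 6)/4 :=
        le_trans (Nat.succ_le_of_lt hd) (dist_le_sub hn a b)
      have e2 : (max (f a) (f b) + 1) ≤ ((a - b).val + 6)/4 := by
        refine le_trans (Nat.succ_le_of_lt ?_) (dist_le_sub hn b a)
        rw [SimpleGraph.dist_comm]; exact hd
      rw [Nat.le_div_iff_mul_le (by norm_num)] at e1 e2
      have h3 : (a - b).val + (b - a).val = n := sub_val_add hn hab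
      have hfa : f a ≤ max (f a) (f b) := le_max_left _ _
      have hfb : f b ≤ max (f a) (f b) := le_max_right _ _
      omega
  · -- main case: support of size ≥ 3
    obtain ⟨k, hkdef⟩ : ∃ k, s.card = k := ⟨s.card, rfl⟩
    rw [hkdef] at hk3
    haveI : NeZero k := ⟨by omega⟩
    let e := s.orderIsoOfFin hkdef
    set u : Fin k → Fin n := fun j => (e j : Fin n) with hu
    have humono : StrictMono u := fun i j hij => by
      exact_mod_cast e.strictMono hij
    have huinj : Function.Injective u := humono.injective
    have humem : ∀ j, u j ∈ s := fun j => (e j).2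
    have hupos : ∀ j, 0 < f (u j) := fun j => hposmem _ (humem j)
    set gap : Fin k → ℕ := fun j => (u (j + 1) - u j).val with hgap
    -- distinctness of cyclic neighbors
    have hone : ((1 : ℕ) : Fin k).val = 1 := by
      rw [Fin.val_natCast]; exact Nat.mod_eq_of_lt (by omega)
    have htwo : ((2 : ℕ) : Fin k).val = 2 := by
      rw [Fin.val_natCast]; exact Nat.mod_eq_of_lt (by omega)
    have hne1 : ∀ j : Fin k, j ≠ j + 1 := by
      intro j hj
      have : (0 : Fin k) = ((1:ℕ) : Fin k) := by
        have := congrArg (fun z => z - j) hj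
        simpa using this
      have := congrArg Fin.val this
      rw [hone] at this
      simp at this
    have hne2 : ∀ j : Fin k, j - 1 ≠ j + 1 := by
      intro j hj
      have : (0 : Fin k) = ((2:ℕ) : Fin k) := by
        have h0 := congrArg (fun z => z - (j - 1)) hj
        simp at h0
        have h21 : ((2:ℕ) : Fin k) = 1 + 1 := by push_cast; ring
        rw [h21]
        exact h0
      have := congrArg Fin.val this
      rw [htwo] at this
      simp at this
    -- the per-vertex inequality
    have hpair : ∀ j : Fin k, 5 * f (u j) ≤ gap (j - 1) + gap j := by
      intro j
      have hj1 : (j - 1) + 1 = j := by ring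
      have h1 : gap (j - 1) = (u j - u (j - 1)).val := by rw [hgap]; simp only [hj1]
      rw [h1, hgap]
      exact pair_bound hn hf
        (fun h => (hne1 (j-1)) (huinj (h.trans (congrArg u hj1.symm))))
        (fun h => (hne1 j) (huinj h))
        (fun h => (hne2 j) (huinj h))
        (hupos _) (hupos _) (hupos _)
    -- total of gaps is n
    have hone' : (1 : Fin k).val = 1 := by simpa using hone
    have hgapsum : ∑ j : Fin k, gap j = n := by
      have hmk : ∀ (x : ℕ) (h : x < k), ((⟨x, h⟩ : Fin k)).val = x := fun _ _ => rfl
      set V : ℕ → ℕ := fun j => (u ⟨min j (k-1), by omega⟩).val with hV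
      have hVarg : ∀ (x : ℕ) (t : Fin k), min x (k-1) = t.val → V x = (u t).val := by
        intro x t h
        rw [hV]
        exact congrArg (fun z => (u z).val) (Fin.ext (by rw [hmk]; exact h))
      have hVmono : Monotone V := by
        intro i j hij
        apply (humono.monotone (a := ⟨min i (k-1), by omega⟩) (b := ⟨min j (k-1), by omega⟩))
        rw [Fin.mk_le_mk]
        omega
      have hVu : ∀ j : Fin k, V j.val = (u j).val := by
        intro j
        exact hVarg j.val j (by have := j.isLt; omega)
      set gapN : ℕ → ℕ := fun j => if j + 1 < k then V (j+1) - V j else n + V 0 - V j with hgapN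
      have hpt : ∀ j : Fin k, gap j = gapN j.val := by
        intro j
        have hjlt := j.isLt
        have h1v : (1 : Fin k).val = 1 := hone'
        have haddv : (j + 1).val = (j.val + 1) % k := by
          rw [Fin.add_def, h1v]
        by_cases hj : j.val + 1 < k
        · have hj1 : (j + 1).val = j.val + 1 := by rw [haddv]; exact Nat.mod_eq_of_lt hj
          have hlt : (u j).val < (u (j+1)).val := humono (by rw [Fin.lt_def, hj1]; omega)
          have hVj1 : V (j.val + 1) = (u (j+1)).val := hVarg _ _ (by rw [hj1]; omega)
          show (u (j+1) - u j).val = if j.val + 1 < k then V (j.val+1) - V j.val else n + V 0 - V j.val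
          rw [sub_val_lt hn hlt, if_pos hj, hVj1, hVu j]
        · have hj1 : (j + 1).val = 0 := by
            rw [haddv, show j.val + 1 = k by omega, Nat.mod_self]
          have hjv : 2 ≤ j.val := by omega
          have hlt : (u (j+1)).val < (u j).val := humono (by rw [Fin.lt_def, hj1]; omega)
          have hV0 : V 0 = (u (j+1)).val := hVarg _ _ (by rw [hj1]; omega)
          show (u (j+1) - u j).val = if j.val + 1 < k then V (j.val+1) - V j.val else n + V 0 - V j.val
          rw [sub_val_gt hn hlt, if_neg hj, hV0, hVu j]
      calc ∑ j : Fin k, gap j = ∑ j : Fin k, gapN j.val := Finset.sum_congr rfl (fun j _ => hpt j)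
        _ = ∑ j ∈ Finset.range k, gapN j := Fin.sum_univ_eq_sum_range gapN k
        _ = n := by
          obtain ⟨m, hm⟩ : ∃ m, k = m + 1 := ⟨k - 1, by omega⟩
          rw [hm, Finset.sum_range_succ]
          have hlast : gapN m = n + V 0 - V m := by
            show (if m + 1 < k then V (m+1) - V m else n + V 0 - V m) = n + V 0 - V m
            rw [if_neg (show ¬ (m + 1 < k) by omega)]
          have hrest : ∑ j ∈ Finset.range m, gapN j = ∑ j ∈ Finset.range m, (V (j+1) - V j) := by
            refine Finset.sum_congr rfl (fun j hj => ?_)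
            rw [Finset.mem_range] at hj
            show (if j + 1 < k then V (j+1) - V j else n + V 0 - V j) = V (j+1) - V j
            rw [if_pos (show j + 1 < k by omega)]
          rw [hrest, Finset.sum_range_tsub hVmono, hlast]
          have h0m : V 0 ≤ V m := hVmono (Nat.zero_le m)
          have hmn : V m < n := (u _).isLt
          omega
    -- put it together
    have htrans : ∑ v ∈ s, f v = ∑ j : Fin k, f (u j) := by
      rw [← Finset.sum_coe_sort s f]
      exact (Equiv.sum_comp e.toEquiv (fun x => f (x : Fin n))).symm
    have hshift : ∑ j : Fin k, gap (j - 1) = ∑ j : Fin k, gap j :=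
      Fintype.sum_equiv (Equiv.subRight (1 : Fin k)) _ _ (fun j => rfl)
    calc 5 * ∑ v, f v = ∑ j : Fin k, 5 * f (u j) := by
          rw [hsum, htrans, Finset.mul_sum]
      _ ≤ ∑ j : Fin k, (gap (j - 1) + gap j) := Finset.sum_le_sum (fun j _ => hpair j)
      _ = 2 * n := by rw [Finset.sum_add_distrib, hshift, hgapsum]; ring

lemma indicator_broadcast (T : Finset (Fin n)) (hT : ∀ x ∈ T, ∀ y ∈ T, ¬ (circulantGraph n 4).Adj x y) :
    IsIndepBroadcast (circulantGraph n 4) (fun v => if v ∈ T then 1 else 0) ∧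
    (∑ v, (if v ∈ T then 1 else 0)) = T.card := by
  constructor
  · constructor
    · intro v
      show (if v ∈ T then 1 else 0) ≤ eccent (circulantGraph n 4) v
      split
      · -- 1 ≤ eccent
        have hne : v ≠ v + ((1:ℕ) : Fin n) := by
          intro h
          exact (adj_step hn v 1 (by omega)).ne h
        have hpos : 0 < (circulantGraph n 4).dist v (v + ((1:ℕ):Fin n)) :=
          (conn hn).pos_dist_of_ne hne
        calc 1 ≤ (circulantGraph n 4).dist v (v + ((1:ℕ):Fin n)) := hpos
          _ ≤ eccent (circulantGraph n 4) v := Finset.le_sup (Finset.mem_univ _)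
      · omega
    · intro x y hxy hx hy
      simp only at hx hy
      have hxT : x ∈ T := by by_contra h; simp [h] at hx
      have hyT : y ∈ T := by by_contra h; simp [h] at hy
      have h1 : 0 < (circulantGraph n 4).dist x y := (conn hn).pos_dist_of_ne hxy
      have h2 : (circulantGraph n 4).dist x y ≠ 1 := by
        intro h
        exact hT x hxT y hyT (SimpleGraph.dist_eq_one_iff_adj.mp h)
      show max (if x ∈ T then 1 else 0) (if y ∈ T then 1 else 0) < (circulantGraph n 4).dist x y
      rw [if_pos hxT, if_pos hyT, max_self]
      omega
  · rw [Finset.sum_ite_mem, Finset.univ_inter, Finset.sum_const, smul_eq_mul, mul_one]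

end Dev

def posf (n i : ℕ) : ℕ :=
  if n % 5 = 1 then (5*i+1)/2
  else if n % 5 = 4 then (if i = 0 then 0 else if i = 1 then 3 else 5*i/2 + 1)
  else 5*i/2

lemma posf_facts {n i j : ℕ} (hn : 8 ≤ n) (hij : i < j) (hj : j < 2*n/5) :
    posf n i + 2 ≤ posf n j ∧ posf n j + 3 ≤ n ∧ posf n j - posf n i ≠ 1 ∧
    posf n j - posf n i ≠ 4 ∧ posf n j - posf n i ≠ n - 4 := by
  obtain ⟨a, b, hb, rfl⟩ : ∃ a b, b < 2 ∧ i = 2*a+b := ⟨i/2, i%2, by omega, by omega⟩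
  obtain ⟨c, d, hd, rfl⟩ : ∃ c d, d < 2 ∧ j = 2*c+d := ⟨j/2, j%2, by omega, by omega⟩
  unfold posf
  split_ifs <;> interval_cases b <;> interval_cases d <;> omega

lemma posf_lt {n j : ℕ} (hn : 8 ≤ n) (hj : j < 2*n/5) : posf n j + 3 ≤ n := by
  obtain ⟨c, d, hd, rfl⟩ : ∃ c d, d < 2 ∧ j = 2*c+d := ⟨j/2, j%2, by omega, by omega⟩
  unfold posf
  split_ifs <;> interval_cases d <;> omega

section Dev2
variable {n : ℕ} [NeZero n] (hn : 8 ≤ n)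
include hn

lemma lower_set : ∃ T : Finset (Fin n),
    (∀ x ∈ T, ∀ y ∈ T, ¬ (circulantGraph n 4).Adj x y) ∧ T.card = 2*n/5 := by
  classical
  refine ⟨(Finset.range (2*n/5)).image (fun i => ((posf n i : ℕ) : Fin n)), ?_, ?_⟩
  · intro x hx y hy hadj
    rw [Finset.mem_image] at hx hy
    obtain ⟨i, hi, rfl⟩ := hx
    obtain ⟨j, hj, rfl⟩ := hy
    rw [Finset.mem_range] at hi hj
    -- wlog i < j
    have key : ∀ i j : ℕ, i < j → j < 2*n/5 →
        ¬ (circulantGraph n 4).Adj ((posf n i : ℕ) : Fin n) ((posf n j : ℕ) : Fin n) := by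
      intro i j hij hjk hadj
      obtain ⟨hm, hb, h1, h4, hn4⟩ := posf_facts hn hij hjk
      have hbi : posf n i + 3 ≤ n := posf_lt hn (by omega)
      have hvi : (((posf n i : ℕ) : Fin n)).val = posf n i := by
        rw [Fin.val_natCast]; exact Nat.mod_eq_of_lt (by omega)
      have hvj : (((posf n j : ℕ) : Fin n)).val = posf n j := by
        rw [Fin.val_natCast]; exact Nat.mod_eq_of_lt (by omega)
      rw [adj_iff, hvi, hvj] at hadj
      obtain ⟨hne, hc⟩ := hadj
      set a := posf n i
      set b := posf n j
      rcases hc with hc | hc | hc | hc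
      · rw [two_mod (n := n) (by omega) (by omega)] at hc
        split at hc <;> omega
      · rw [two_mod (n := n) (by omega) (by omega)] at hc
        split at hc <;> omega
      · rw [two_mod (n := n) (by omega) (by omega)] at hc
        split at hc <;> omega
      · rw [two_mod (n := n) (by omega) (by omega)] at hc
        split at hc <;> omega
    rcases Nat.lt_trichotomy i j with h | h | h
    · exact key i j h hj hadj
    · subst h; exact (circulantGraph n 4).loopless.irrefl _ hadj
    · exact key j i h hi hadj.symm
  · rw [Finset.card_image_of_injOn, Finset.card_range]
    intro i hi j hj hij
    rw [Finset.mem_coe, Finset.mem_range] at hi hj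
    have hvi : (((posf n i : ℕ) : Fin n)).val = posf n i := by
      rw [Fin.val_natCast]; exact Nat.mod_eq_of_lt (by have := posf_lt hn hi; omega)
    have hvj : (((posf n j : ℕ) : Fin n)).val = posf n j := by
      rw [Fin.val_natCast]; exact Nat.mod_eq_of_lt (by have := posf_lt hn hj; omega)
    have := congrArg Fin.val hij
    rw [hvi, hvj] at this
    rcases Nat.lt_trichotomy i j with h | h | h
    · have := (posf_facts hn h hj).1; omega
    · exact h
    · have := (posf_facts hn h hi).1; omega

end Dev2


theorem stmt18' (n : ℕ) (hn : 8 ≤ n) :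
    (sSup {k | ∃ f : Fin n → ℕ, IsIndepBroadcast (circulantGraph n 4) f ∧ ∑ v, f v = k}) = 2 * n / 5 ∧
    (sSup {k | ∃ s : Finset (Fin n), (∀ u ∈ s, ∀ v ∈ s, ¬ (circulantGraph n 4).Adj u v) ∧ s.card = k}) = 2 * n / 5 := by
  haveI : NeZero n := ⟨by omega⟩
  obtain ⟨T, hTind, hTcard⟩ := lower_set hn
  obtain ⟨hTb, hTsum⟩ := indicator_broadcast hn T hTind
  constructor
  · apply le_antisymm
    · apply csSup_le
      · exact ⟨T.card, ⟨_, hTb, hTsum⟩⟩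
      · rintro k ⟨f, hf, rfl⟩
        have := sum_bound hn hf
        omega
    · apply le_csSup
      · refine ⟨2*n/5, ?_⟩
        rintro k ⟨f, hf, rfl⟩
        have := sum_bound hn hf
        omega
      · exact ⟨_, hTb, hTsum.trans hTcard⟩
  · apply le_antisymm
    · apply csSup_le
      · exact ⟨T.card, ⟨T, hTind, rfl⟩⟩
      · rintro k ⟨s', hs', rfl⟩
        obtain ⟨hb, hsum⟩ := indicator_broadcast hn s' hs'
        have := sum_bound hn hb
        rw [hsum] at this
        omega
    · apply le_csSup
      · refine ⟨2*n/5, ?_⟩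
        rintro k ⟨s', hs', rfl⟩
        obtain ⟨hb, hsum⟩ := indicator_broadcast hn s' hs'
        have := sum_bound hn hb
        rw [hsum] at this
        omega
      · exact ⟨T, hTind, hTcard⟩

theorem stmt18 (n : ℕ) (hn : 8 ≤ n) :
    betaB (circulantGraph n 4) = 2 * n / 5 ∧
    alphaNum (circulantGraph n 4) = 2 * n / 5 := by
  unfold betaB alphaNum
  exact stmt18' n hn
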